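/- Suppose the frequencies are perfectly harmonic, i.e., ω_k = k·ω̃₀ for k = 1,…,K with ω̃₀ > 0, and a_k > 0 for all k. Then q_K(ω̃₀) = 0, and q_K(ω) > 0 for every real ω ≠ ω̃₀. In particular, ω̃₀ is the unique global minimizer of q_K over ℝ. -/

import Mathlib

open Finset

/-- The optimal-transport cost `q_L(ω) = 2π·Σ_{k=1}^K a_k²·min_{ℓ∈{1,…,L}} (ℓω − ω_k)²`. -/
noncomputable def qcost (K L : ℕ) (hL : 1 ≤ L) (a ω : ℕ → ℝ) (x : ℝ) : ℝ :=
  2 * Real.pi * ∑ k ∈ Finset.Icc 1 K, (a k) ^ 2 *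
    (Finset.Icc 1 L).inf' (Finset.nonempty_Icc.mpr hL)
      (fun ℓ => ((ℓ : ℝ) * x - ω k) ^ 2)

lemma inf'_nonneg (K : ℕ) (hK : 1 ≤ K) (c x : ℝ) :
    0 ≤ (Finset.Icc 1 K).inf' (Finset.nonempty_Icc.mpr hK)
      (fun ℓ => ((ℓ : ℝ) * x - c) ^ 2) :=
  Finset.le_inf' _ _ fun ℓ _ => sq_nonneg _

/-- for a perfectly harmonic spectrum (`ω_k = k·ω̃₀`, `a_k > 0`),
`q_K(ω̃₀) = 0` and `q_K(ω) > 0` for every `ω ≠ ω̃₀`; in particular `ω̃₀` is the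
unique global minimizer of `q_K`. -/
theorem stmt_2 (K : ℕ) (hK : 1 ≤ K) (a ω : ℕ → ℝ)
    (ha : ∀ k ∈ Finset.Icc 1 K, 0 < a k)
    (ω₀' : ℝ) (hω₀' : 0 < ω₀')
    (hharm : ∀ k ∈ Finset.Icc 1 K, ω k = (k : ℝ) * ω₀') :
    qcost K K hK a ω ω₀' = 0 ∧ ∀ x : ℝ, x ≠ ω₀' → 0 < qcost K K hK a ω x := by
  constructor
  · unfold qcost
    rw [mul_eq_zero]
    right
    apply Finset.sum_eq_zero
    intro k hk
    have h1 : (Finset.Icc 1 K).inf' (Finset.nonempty_Icc.mpr hK)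
        (fun ℓ => ((ℓ : ℝ) * ω₀' - ω k) ^ 2) ≤ 0 := by
      have := Finset.inf'_le (fun ℓ : ℕ => ((ℓ : ℝ) * ω₀' - ω k) ^ 2) hk
      exact this.trans (le_of_eq (by simp [hharm k hk]))
    have h2 := inf'_nonneg K hK (ω k) ω₀'
    rw [le_antisymm h1 h2, mul_zero]
  · intro x hx
    unfold qcost
    have hpi : (0:ℝ) < 2 * Real.pi := by positivity
    apply mul_pos hpi
    -- find k with positive inf'
    have key : ∃ k ∈ Finset.Icc 1 K, ∀ ℓ ∈ Finset.Icc 1 K, (ℓ : ℝ) * x ≠ ω k := by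
      by_cases h : ∀ ℓ ∈ Finset.Icc 1 K, (ℓ : ℝ) * x ≠ ω 1
      · exact ⟨1, Finset.mem_Icc.mpr ⟨le_refl 1, hK⟩, h⟩
      · push_neg at h
        obtain ⟨ℓ₀, hℓ₀, heq⟩ := h
        have h1K : (1:ℕ) ∈ Finset.Icc 1 K := Finset.mem_Icc.mpr ⟨le_refl 1, hK⟩
        have hω1 : ω 1 = ω₀' := by simpa using hharm 1 h1K
        have hℓ₀2 : 2 ≤ ℓ₀ := by
          rcases Finset.mem_Icc.mp hℓ₀ with ⟨h1, h2⟩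
          rcases Nat.lt_or_ge ℓ₀ 2 with hlt | hge
          · interval_cases ℓ₀
            · exfalso; apply hx; simpa [hω1] using heq
          · exact hge
        refine ⟨K, Finset.mem_Icc.mpr ⟨hK, le_refl K⟩, ?_⟩
        intro ℓ hℓ hc
        have hωK : ω K = (K : ℝ) * ω₀' := hharm K (Finset.mem_Icc.mpr ⟨hK, le_refl K⟩)
        have hx' : x = ω₀' / ℓ₀ := by
          have hℓ₀pos : (0:ℝ) < ℓ₀ := by positivity
          field_simp
          rw [mul_comm]; simpa [hω1] using heq
        rw [hx', hωK] at hc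
        have hℓ₀pos : (0:ℝ) < (ℓ₀:ℝ) := by positivity
        have : (ℓ : ℝ) = (K : ℝ) * ℓ₀ := by
          field_simp at hc
          have h' : (ℓ:ℝ) * ω₀' = ((K:ℝ) * ℓ₀) * ω₀' := by linear_combination ω₀' * hc
          exact mul_right_cancel₀ (ne_of_gt hω₀') h'
        have hℓn : ℓ = K * ℓ₀ := by exact_mod_cast this
        have : ℓ ≤ K := (Finset.mem_Icc.mp hℓ).2
        have : K * 2 ≤ K * ℓ₀ := Nat.mul_le_mul_left K hℓ₀2
        omega
    obtain ⟨k, hk, hkne⟩ := key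
    apply Finset.sum_pos'
    · intro i hi
      exact mul_nonneg (sq_nonneg _) (inf'_nonneg K hK (ω i) x)
    · refine ⟨k, hk, mul_pos (pow_pos (ha k hk) 2) ?_⟩
      rw [Finset.lt_inf'_iff]
      intro ℓ hℓ
      have hne : (ℓ : ℝ) * x - ω k ≠ 0 := sub_ne_zero.mpr (hkne ℓ hℓ)
      positivity
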